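/- (Kolmogorov distance controlled by the C³ distance to the Gaussian.) There exists a universal constant C > 0 such that for every Borel probability measure μ on ℝ, sup_{x∈ℝ} | μ((−∞,x]) − γ((−∞,x]) | ≤ C · d_{C³}(μ,γ)^{1/4}, where γ is the standard Gaussian measure and d_{C³}(μ,γ) := sup over φ : ℝ → ℝ of class C³ with ‖φ^{(k)}‖_∞ ≤ 1 for k = 0,1,2,3 of (∫_ℝ φ dμ − ∫_ℝ φ dγ). -/

import Mathlib

open MeasureTheory ProbabilityTheory Set

def P0 (t : ℝ) : ℝ := 1 - 35*t^4 + 84*t^5 - 70*t^6 + 20*t^7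
def P1 (t : ℝ) : ℝ := -140*t^3 + 420*t^4 - 420*t^5 + 140*t^6
def P2 (t : ℝ) : ℝ := -420*t^2 + 1680*t^3 - 2100*t^4 + 840*t^5
def P3 (t : ℝ) : ℝ := -840*t + 5040*t^2 - 8400*t^3 + 4200*t^4

lemma hasDerivAt_P0 (t : ℝ) : HasDerivAt P0 (P1 t) t := by
  unfold P0 P1
  have h4 := hasDerivAt_pow 4 t
  have h5 := hasDerivAt_pow 5 t
  have h6 := hasDerivAt_pow 6 t
  have h7 := hasDerivAt_pow 7 t
  have := ((((hasDerivAt_const t (1:ℝ)).sub (h4.const_mul 35)).add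
    (h5.const_mul 84)).sub (h6.const_mul 70)).add (h7.const_mul 20)
  exact this.congr_deriv (by push_cast; ring)

lemma hasDerivAt_P1 (t : ℝ) : HasDerivAt P1 (P2 t) t := by
  unfold P1 P2
  have h3 := hasDerivAt_pow 3 t
  have h4 := hasDerivAt_pow 4 t
  have h5 := hasDerivAt_pow 5 t
  have h6 := hasDerivAt_pow 6 t
  have := (((h3.const_mul (-140:ℝ)).add (h4.const_mul 420)).sub
    (h5.const_mul 420)).add (h6.const_mul 140)
  exact this.congr_deriv (by push_cast; ring)

lemma hasDerivAt_P2 (t : ℝ) : HasDerivAt P2 (P3 t) t := by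
  unfold P2 P3
  have h2 := hasDerivAt_pow 2 t
  have h3 := hasDerivAt_pow 3 t
  have h4 := hasDerivAt_pow 4 t
  have h5 := hasDerivAt_pow 5 t
  have := (((h2.const_mul (-420:ℝ)).add (h3.const_mul 1680)).sub
    (h4.const_mul 2100)).add (h5.const_mul 840)
  exact this.congr_deriv (by push_cast; ring)

lemma contP3 : Continuous P3 := by unfold P3; continuity

lemma hasDerivAt_ite {f g : ℝ → ℝ} {a : ℝ} {f' : ℝ} (hf : HasDerivAt f f' a)
    (hg : HasDerivAt g f' a) (hfg : f a = g a) :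
    HasDerivAt (fun x => if x ≤ a then f x else g x) f' a := by
  have h1 : HasDerivWithinAt (fun x => if x ≤ a then f x else g x) f' (Set.Iic a) a :=
    hf.hasDerivWithinAt.congr (fun x hx => by simp [Set.mem_Iic.mp hx]) (by simp)
  have h2 : HasDerivWithinAt (fun x => if x ≤ a then f x else g x) f' (Set.Ici a) a :=
    hg.hasDerivWithinAt.congr (fun x hx => by
      rcases eq_or_lt_of_le (Set.mem_Ici.mp hx) with h | h
      · simp [← h, hfg]
      · simp [not_le.mpr h]) (by simp [hfg])
  have := h1.union h2
  rw [Set.Iic_union_Ici] at this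
  exact hasDerivWithinAt_univ.mp this

noncomputable def glue (c : ℝ) (p : ℝ → ℝ) (x : ℝ) : ℝ :=
  if x ≤ 0 then c else if x ≤ 1 then p x else 0

lemma hasDerivAt_inner {p q : ℝ → ℝ} (hpq : ∀ t, HasDerivAt p (q t) t)
    (hp1 : p 1 = 0) (hq1 : q 1 = 0) (x : ℝ) :
    HasDerivAt (fun x => if x ≤ 1 then p x else 0) (if x ≤ 1 then q x else 0) x := by
  rcases lt_trichotomy x 1 with h | h | h
  · rw [if_pos h.le]
    exact (hpq x).congr_of_eventuallyEq <| Filter.eventually_of_mem (Iio_mem_nhds h)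
      (fun y hy => by simp [(Set.mem_Iio.mp hy).le])
  · subst h
    rw [if_pos le_rfl, hq1]
    exact hasDerivAt_ite (by simpa [hq1] using hpq 1) (hasDerivAt_const 1 0) (by simp [hp1])
  · rw [if_neg (not_le.mpr h)]
    exact (hasDerivAt_const x 0).congr_of_eventuallyEq <| Filter.eventually_of_mem
      (Ioi_mem_nhds h) (fun y hy => by simp [not_le.mpr (Set.mem_Ioi.mp hy)])

lemma hasDerivAt_glue {p q : ℝ → ℝ} {c : ℝ} (hpq : ∀ t, HasDerivAt p (q t) t)
    (hp0 : p 0 = c) (hq0 : q 0 = 0) (hp1 : p 1 = 0) (hq1 : q 1 = 0) (x : ℝ) :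
    HasDerivAt (glue c p) (glue 0 q x) x := by
  have hT := hasDerivAt_inner hpq hp1 hq1
  have hglue : glue c p = fun x => if x ≤ 0 then (fun _ : ℝ => c) x
      else (fun x => if x ≤ 1 then p x else 0) x := rfl
  rcases lt_trichotomy x 0 with h | h | h
  · rw [show glue 0 q x = 0 by simp [glue, h.le]]
    exact (hasDerivAt_const x c).congr_of_eventuallyEq <| Filter.eventually_of_mem
      (Iio_mem_nhds h) (fun y hy => by simp [glue, (Set.mem_Iio.mp hy).le])
  · subst h
    rw [show glue 0 q (0:ℝ) = 0 by simp [glue]]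
    rw [hglue]
    exact hasDerivAt_ite (f := fun _ => c) (g := fun x => if x ≤ 1 then p x else 0)
      (hasDerivAt_const 0 c) (by simpa [hq0] using hT 0) (by simp [hp0])
  · rw [show glue 0 q x = if x ≤ 1 then q x else 0 by simp [glue, not_le.mpr h]]
    exact (hT x).congr_of_eventuallyEq <| Filter.eventually_of_mem
      (Ioi_mem_nhds h) (fun y hy => by simp [glue, not_le.mpr (Set.mem_Ioi.mp hy)])

lemma P0_nonneg {t : ℝ} (h0 : 0 ≤ t) (h1 : t ≤ 1) : 0 ≤ P0 t := by
  have key : P0 t = (1-t)^4 * (1 + 4*t + 10*t^2 + 20*t^3) := by unfold P0; ring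
  rw [key]
  have : (0:ℝ) ≤ (1-t)^4 := by positivity
  nlinarith [pow_nonneg h0 2, pow_nonneg h0 3]

lemma P0_le_one {t : ℝ} (h0 : 0 ≤ t) (h1 : t ≤ 1) : P0 t ≤ 1 := by
  have key : 1 - P0 t = t^4 * (1 + 4*(1-t) + 10*(1-t)^2 + 20*(1-t)^3) := by unfold P0; ring
  have hu : (0:ℝ) ≤ 1-t := by linarith
  have hq : (0:ℝ) ≤ 1 + 4*(1-t) + 10*(1-t)^2 + 20*(1-t)^3 := by
    have := pow_nonneg hu 2
    have := pow_nonneg hu 3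
    nlinarith
  nlinarith [mul_nonneg (pow_nonneg h0 4) hq]

lemma abs_P1_le {t : ℝ} (h0 : 0 ≤ t) (h1 : t ≤ 1) : |P1 t| ≤ 840 := by
  have key : P1 t = -(140 * (t*(1-t))^3) := by unfold P1; ring
  have hs0 : (0:ℝ) ≤ t*(1-t) := mul_nonneg h0 (by linarith)
  have hs1 : t*(1-t) ≤ 1 := by nlinarith
  have h3 : (t*(1-t))^3 ≤ 1 := pow_le_one₀ hs0 hs1
  have h3' : (0:ℝ) ≤ (t*(1-t))^3 := pow_nonneg hs0 3
  rw [key, abs_le]; constructor <;> nlinarith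

lemma abs_P2_le {t : ℝ} (h0 : 0 ≤ t) (h1 : t ≤ 1) : |P2 t| ≤ 840 := by
  have key : P2 t = -(420 * (t*(1-t))^2 * (1-2*t)) := by unfold P2; ring
  have hs0 : (0:ℝ) ≤ t*(1-t) := mul_nonneg h0 (by linarith)
  have hs1 : t*(1-t) ≤ 1 := by nlinarith
  have h2 : (t*(1-t))^2 ≤ 1 := pow_le_one₀ hs0 hs1
  have h2' : (0:ℝ) ≤ (t*(1-t))^2 := pow_nonneg hs0 2
  have hu1 : (1-2*t) ≤ 1 := by linarith
  have hu2 : -1 ≤ (1-2*t) := by linarith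
  rw [key, abs_le]; constructor <;> nlinarith

lemma abs_P3_le {t : ℝ} (h0 : 0 ≤ t) (h1 : t ≤ 1) : |P3 t| ≤ 840 := by
  have key : P3 t = -(840 * (t*(1-t)) * (1 - 5*t + 5*t^2)) := by unfold P3; ring
  have hs0 : (0:ℝ) ≤ t*(1-t) := mul_nonneg h0 (by linarith)
  have hs1 : t*(1-t) ≤ 1 := by nlinarith
  have hu1 : (1 - 5*t + 5*t^2) ≤ 1 := by nlinarith
  have hu2 : -1 ≤ (1 - 5*t + 5*t^2) := by nlinarith [sq_nonneg (2*t-1)]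
  rw [key, abs_le]; constructor <;> nlinarith

noncomputable def S0 : ℝ → ℝ := glue 1 P0
noncomputable def S1 : ℝ → ℝ := glue 0 P1
noncomputable def S2 : ℝ → ℝ := glue 0 P2
noncomputable def S3 : ℝ → ℝ := glue 0 P3

lemma P0_zero : P0 0 = 1 := by norm_num [P0]
lemma P0_one : P0 1 = 0 := by norm_num [P0]
lemma P1_zero : P1 0 = 0 := by norm_num [P1]
lemma P1_one : P1 1 = 0 := by norm_num [P1]
lemma P2_zero : P2 0 = 0 := by norm_num [P2]
lemma P2_one : P2 1 = 0 := by norm_num [P2]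
lemma P3_zero : P3 0 = 0 := by norm_num [P3]
lemma P3_one : P3 1 = 0 := by norm_num [P3]

lemma hasDerivAt_S0 (x : ℝ) : HasDerivAt S0 (S1 x) x :=
  hasDerivAt_glue hasDerivAt_P0 P0_zero P1_zero P0_one P1_one x
lemma hasDerivAt_S1 (x : ℝ) : HasDerivAt S1 (S2 x) x :=
  hasDerivAt_glue hasDerivAt_P1 P1_zero P2_zero P1_one P2_one x
lemma hasDerivAt_S2 (x : ℝ) : HasDerivAt S2 (S3 x) x :=
  hasDerivAt_glue hasDerivAt_P2 P2_zero P3_zero P2_one P3_one x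

lemma continuous_S3 : Continuous S3 := by
  have hinner : Continuous fun x : ℝ => if x ≤ 1 then P3 x else 0 :=
    Continuous.if_le contP3 continuous_const continuous_id continuous_const
      (fun x hx => by rw [show x = (1:ℝ) from hx, P3_one])
  show Continuous fun x : ℝ => if x ≤ (0:ℝ) then (0:ℝ) else if x ≤ 1 then P3 x else 0
  exact Continuous.if_le continuous_const hinner continuous_id continuous_const
    (fun x hx => by rw [show x = (0:ℝ) from hx]; simp [P3_zero])

lemma contDiff_S0 : ContDiff ℝ 3 S0 := by
  have d0 : deriv S0 = S1 := funext fun x => (hasDerivAt_S0 x).deriv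
  have d1 : deriv S1 = S2 := funext fun x => (hasDerivAt_S1 x).deriv
  have d2 : deriv S2 = S3 := funext fun x => (hasDerivAt_S2 x).deriv
  rw [show (3 : WithTop ℕ∞) = 2 + 1 by norm_num, contDiff_succ_iff_deriv]
  refine ⟨fun x => (hasDerivAt_S0 x).differentiableAt, by simp, ?_⟩
  rw [d0, show (2 : WithTop ℕ∞) = 1 + 1 by norm_num, contDiff_succ_iff_deriv]
  refine ⟨fun x => (hasDerivAt_S1 x).differentiableAt, by simp, ?_⟩
  rw [d1, show (1 : WithTop ℕ∞) = 0 + 1 by norm_num, contDiff_succ_iff_deriv]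
  refine ⟨fun x => (hasDerivAt_S2 x).differentiableAt, by simp, ?_⟩
  rw [d2]
  exact contDiff_zero.mpr continuous_S3

lemma S0_of_nonpos {x : ℝ} (h : x ≤ 0) : S0 x = 1 := by simp [S0, glue, h]
lemma S0_of_one_le {x : ℝ} (h : 1 ≤ x) : S0 x = 0 := by
  rcases le_or_gt x 0 with h0 | h0
  · have : (1:ℝ) ≤ 0 := h.trans h0
    norm_num at this
  · rcases le_or_gt x 1 with h1 | h1
    · have : x = 1 := le_antisymm h1 h
      simp [S0, glue, not_le.mpr h0, this, P0_one]
    · simp [S0, glue, not_le.mpr h0, not_le.mpr h1]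

lemma S0_nonneg (x : ℝ) : 0 ≤ S0 x := by
  unfold S0 glue
  split_ifs with h1 h2
  · norm_num
  · exact P0_nonneg (le_of_not_ge h1) h2
  · norm_num
lemma S0_le_one (x : ℝ) : S0 x ≤ 1 := by
  unfold S0 glue
  split_ifs with h1 h2
  · norm_num
  · exact P0_le_one (le_of_not_ge h1) h2
  · norm_num

lemma abs_S0_le (x : ℝ) : |S0 x| ≤ 840 := by
  rw [abs_le]; constructor
  · linarith [S0_nonneg x]
  · linarith [S0_le_one x]

lemma abs_glue_le {p : ℝ → ℝ} (hp : ∀ t, 0 ≤ t → t ≤ 1 → |p t| ≤ 840) (x : ℝ) :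
    |glue 0 p x| ≤ 840 := by
  unfold glue
  split_ifs with h1 h2
  · norm_num
  · exact hp x (le_of_not_ge h1) h2
  · norm_num

lemma abs_S1_le (x : ℝ) : |S1 x| ≤ 840 := abs_glue_le (fun t h0 h1 => abs_P1_le h0 h1) x
lemma abs_S2_le (x : ℝ) : |S2 x| ≤ 840 := abs_glue_le (fun t h0 h1 => abs_P2_le h0 h1) x
lemma abs_S3_le (x : ℝ) : |S3 x| ≤ 840 := abs_glue_le (fun t h0 h1 => abs_P3_le h0 h1) x

open Filter

/-! ### Scaled test functions -/

lemma hasDerivAt_scaled {g g' : ℝ → ℝ} (hg : ∀ u, HasDerivAt g (g' u) u)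
    (x : ℝ) {ε : ℝ} (hε : ε ≠ 0) (a : ℝ) (t : ℝ) :
    HasDerivAt (fun t => a * g ((t - x)/ε)) ((a/ε) * g' ((t - x)/ε)) t := by
  have h1 : HasDerivAt (fun t : ℝ => (t - x)/ε) (1/ε) t := by
    simpa using ((hasDerivAt_id t).sub_const x).div_const ε
  have h2 : HasDerivAt (fun t : ℝ => g ((t - x)/ε)) (g' ((t - x)/ε) * (1/ε)) t :=
    (hg ((t - x)/ε)).comp t h1
  have h3 := h2.const_mul a
  exact h3.congr_deriv (by ring)

lemma deriv_scaled {g g' : ℝ → ℝ} (hg : ∀ u, HasDerivAt g (g' u) u)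
    (x : ℝ) {ε : ℝ} (hε : ε ≠ 0) (a : ℝ) :
    deriv (fun t => a * g ((t - x)/ε)) = fun t => (a/ε) * g' ((t - x)/ε) :=
  funext fun t => (hasDerivAt_scaled hg x hε a t).deriv

lemma abs_mul_le_one {a s : ℝ} (ha : |a| ≤ 1/840) (hs : |s| ≤ 840) : |a * s| ≤ 1 := by
  rw [abs_mul]
  calc |a| * |s| ≤ (1/840) * 840 := by
        apply mul_le_mul ha hs (abs_nonneg s) (by norm_num)
    _ = 1 := by norm_num

/-- The scaled test function belongs to the defining set of `dC3`. -/
lemma scaled_mem_dC3set (μ : Measure ℝ) (x : ℝ) {ε : ℝ} (hε : 0 < ε) (hε1 : ε ≤ 1)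
    {a : ℝ} (ha : |a| ≤ ε^3/840) :
    ((∫ t, a * S0 ((t - x)/ε) ∂μ) - ∫ t, a * S0 ((t - x)/ε) ∂(gaussianReal 0 1)) ∈
      { r : ℝ | ∃ φ : ℝ → ℝ, ContDiff ℝ 3 φ ∧
        (∀ k ≤ 3, ∀ x, |iteratedDeriv k φ x| ≤ 1) ∧
        r = (∫ x, φ x ∂μ) - ∫ y, φ y ∂(gaussianReal 0 1) } := by
  have hεne : ε ≠ 0 := ne_of_gt hε
  refine ⟨fun t => a * S0 ((t - x)/ε), ?_, ?_, rfl⟩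
  · exact contDiff_const.mul
      (contDiff_S0.comp ((contDiff_id.sub contDiff_const).div_const ε))
  · have i1 : iteratedDeriv 1 (fun t => a * S0 ((t - x)/ε))
        = fun t => (a/ε) * S1 ((t - x)/ε) := by
      rw [iteratedDeriv_one]; exact deriv_scaled hasDerivAt_S0 x hεne a
    have i2 : iteratedDeriv 2 (fun t => a * S0 ((t - x)/ε))
        = fun t => (a/ε/ε) * S2 ((t - x)/ε) := by
      rw [iteratedDeriv_succ, i1]; exact deriv_scaled hasDerivAt_S1 x hεne (a/ε)
    have i3 : iteratedDeriv 3 (fun t => a * S0 ((t - x)/ε))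
        = fun t => (a/ε/ε/ε) * S3 ((t - x)/ε) := by
      rw [iteratedDeriv_succ, i2]; exact deriv_scaled hasDerivAt_S2 x hεne (a/ε/ε)
    have hε3 : ε^3 ≤ 1 := pow_le_one₀ hε.le hε1
    have hεk : ∀ k : ℕ, k ≤ 3 → |a| / ε^k ≤ 1/840 := by
      intro k hk
      rw [div_le_div_iff₀ (by positivity) (by norm_num)]
      calc |a| * 840 ≤ (ε^3/840) * 840 := by nlinarith [abs_nonneg a]
        _ = ε^3 := by ring
        _ ≤ ε^k := pow_le_pow_of_le_one hε.le hε1 hk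
        _ = 1 * ε^k := (one_mul _).symm
    intro k hk t
    interval_cases k
    · rw [iteratedDeriv_zero]
      exact abs_mul_le_one (by simpa using hεk 0 (by norm_num)) (abs_S0_le _)
    · rw [i1]
      refine abs_mul_le_one ?_ (abs_S1_le _)
      have := hεk 1 (by norm_num)
      rw [pow_one] at this
      rw [abs_div, abs_of_nonneg hε.le]
      exact this
    · rw [i2]
      refine abs_mul_le_one ?_ (abs_S2_le _)
      have := hεk 2 (by norm_num)
      rw [pow_two] at this
      calc |a/ε/ε| = |a|/ε/ε := by rw [abs_div, abs_div, abs_of_nonneg hε.le]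
        _ = |a|/(ε*ε) := by rw [div_div]
        _ ≤ 1/840 := this
    · rw [i3]
      refine abs_mul_le_one ?_ (abs_S3_le _)
      have := hεk 3 (by norm_num)
      rw [pow_succ, pow_two] at this
      calc |a/ε/ε/ε| = |a|/ε/ε/ε := by
            rw [abs_div, abs_div, abs_div, abs_of_nonneg hε.le]
        _ = |a|/(ε*ε*ε) := by rw [div_div, div_div]; ring_nf
        _ ≤ 1/840 := this

/-- The `C³` distance between a probability measure `μ` on `ℝ` and the standard Gaussian
measure `γ`: the supremum over `C³` functions `φ` whose derivatives of order `0,…,3` are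
bounded by `1` of `∫ φ dμ − ∫ φ dγ`. -/
noncomputable def dC3 (μ : Measure ℝ) : ℝ :=
  sSup { r : ℝ | ∃ φ : ℝ → ℝ, ContDiff ℝ 3 φ ∧
      (∀ k ≤ 3, ∀ x, |iteratedDeriv k φ x| ≤ 1) ∧
      r = (∫ x, φ x ∂μ) - ∫ y, φ y ∂(gaussianReal 0 1) }

lemma abs_integral_le_one {ν : Measure ℝ} [IsProbabilityMeasure ν] {φ : ℝ → ℝ}
    (h : ∀ x, |φ x| ≤ 1) : |∫ x, φ x ∂ν| ≤ 1 := by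
  have := norm_integral_le_of_norm_le_const (μ := ν) (f := φ) (C := 1)
    (Filter.Eventually.of_forall (fun x => by simpa using h x))
  simpa using this

lemma bddAbove_dC3set (μ : Measure ℝ) [IsProbabilityMeasure μ] :
    BddAbove { r : ℝ | ∃ φ : ℝ → ℝ, ContDiff ℝ 3 φ ∧
      (∀ k ≤ 3, ∀ x, |iteratedDeriv k φ x| ≤ 1) ∧
      r = (∫ x, φ x ∂μ) - ∫ y, φ y ∂(gaussianReal 0 1) } := by
  refine ⟨2, fun r hr => ?_⟩
  obtain ⟨φ, -, hbd, rfl⟩ := hr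
  have h0 : ∀ x, |φ x| ≤ 1 := by
    intro x
    have := hbd 0 (by norm_num) x
    rwa [iteratedDeriv_zero] at this
  have h1 := abs_integral_le_one (ν := μ) h0
  have h2 := abs_integral_le_one (ν := gaussianReal 0 1) h0
  rw [abs_le] at h1 h2
  linarith [h1.1, h1.2, h2.1, h2.2]

lemma iteratedDeriv_zero_fun (k : ℕ) :
    iteratedDeriv k (fun _ : ℝ => (0:ℝ)) = fun _ => 0 := by
  induction k with
  | zero => rw [iteratedDeriv_zero]
  | succ n ih => rw [iteratedDeriv_succ, ih]; funext t; exact deriv_const t 0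

lemma dC3_nonneg (μ : Measure ℝ) [IsProbabilityMeasure μ] : 0 ≤ dC3 μ := by
  apply le_csSup (bddAbove_dC3set μ)
  exact ⟨fun _ => 0, contDiff_const, fun k _ x => by rw [iteratedDeriv_zero_fun]; norm_num,
    by simp⟩

/-! ### Integral comparison lemmas -/

lemma integrable_S0scaled (ν : Measure ℝ) [IsProbabilityMeasure ν] (x : ℝ) {ε : ℝ}
    (hε : 0 < ε) : Integrable (fun t => S0 ((t - x)/ε)) ν := by
  refine (integrable_const (1:ℝ)).mono' ?_ ?_
  · exact (contDiff_S0.continuous.comp (by continuity)).aestronglyMeasurable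
  · refine Filter.Eventually.of_forall fun t => ?_
    rw [Real.norm_eq_abs, abs_of_nonneg (S0_nonneg _)]
    exact S0_le_one _

lemma lemA (ν : Measure ℝ) [IsProbabilityMeasure ν] (x : ℝ) {ε : ℝ} (hε : 0 < ε) :
    (ν (Set.Iic x)).toReal ≤ ∫ t, S0 ((t - x)/ε) ∂ν := by
  rw [← measureReal_def, ← integral_indicator_one measurableSet_Iic]
  refine integral_mono ((integrable_const (1:ℝ)).indicator measurableSet_Iic)
    (integrable_S0scaled ν x hε) fun t => ?_
  rw [Set.indicator_apply]
  split_ifs with h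
  · rw [show S0 ((t-x)/ε) = 1 from S0_of_nonpos (by
      apply div_nonpos_of_nonpos_of_nonneg <;> [linarith [Set.mem_Iic.mp h]; exact hε.le])]
    simp
  · simpa using S0_nonneg ((t-x)/ε)

lemma lemB (ν : Measure ℝ) [IsProbabilityMeasure ν] (x : ℝ) {ε : ℝ} (hε : 0 < ε) :
    ∫ t, S0 ((t - x)/ε) ∂ν ≤ (ν (Set.Iic (x + ε))).toReal := by
  rw [← measureReal_def, ← integral_indicator_one measurableSet_Iic]
  refine integral_mono (integrable_S0scaled ν x hε)
    ((integrable_const (1:ℝ)).indicator measurableSet_Iic) fun t => ?_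
  rw [Set.indicator_apply]
  split_ifs with h
  · simpa using S0_le_one ((t-x)/ε)
  · rw [show S0 ((t-x)/ε) = 0 from S0_of_one_le (by
      rw [le_div_iff₀ hε]
      have := Set.mem_Iic.not.mp h
      push_neg at this
      linarith)]

lemma gaussianPDFReal_le_one (t : ℝ) : gaussianPDFReal 0 1 t ≤ 1 := by
  rw [gaussianPDFReal]
  have h1 : Real.sqrt (2 * Real.pi * (1:NNReal)) ≥ 1 := by
    rw [ge_iff_le, show ((1:NNReal):ℝ) = (1:ℝ) by norm_num]
    rw [Real.one_le_sqrt]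
    nlinarith [Real.pi_gt_three]
  have h2 : Real.exp (-(t - 0)^2 / (2 * (1:NNReal))) ≤ 1 := by
    rw [Real.exp_le_one_iff]
    have : (0:ℝ) ≤ (t - 0)^2 := sq_nonneg _
    have h3 : ((2:ℝ) * (1:NNReal)) > 0 := by norm_num
    apply div_nonpos_of_nonpos_of_nonneg <;> nlinarith
  have h4 : (1:ℝ) / Real.sqrt (2 * Real.pi * (1:NNReal)) ≤ 1 := by
    rw [div_le_one (by linarith)]; linarith
  have h5 : (0:ℝ) ≤ Real.exp (-(t - 0)^2 / (2 * (1:NNReal))) := (Real.exp_pos _).le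
  rw [← one_div]
  calc (1 / Real.sqrt (2 * Real.pi * (1:NNReal))) * Real.exp (-(t - 0)^2 / (2 * (1:NNReal)))
      ≤ 1 * 1 := by
        apply mul_le_mul h4 h2 h5 (by norm_num)
    _ = 1 := by norm_num

lemma lemC (x : ℝ) {ε : ℝ} (hε : 0 < ε) :
    ((gaussianReal 0 1) (Set.Iic (x + ε))).toReal
      ≤ ((gaussianReal 0 1) (Set.Iic x)).toReal + ε := by
  have hsplit : Set.Iic (x + ε) = Set.Iic x ∪ Set.Ioc x (x + ε) :=
    (Set.Iic_union_Ioc_eq_Iic (by linarith)).symm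
  rw [hsplit, measure_union (Set.Iic_disjoint_Ioc le_rfl) measurableSet_Ioc,
    ENNReal.toReal_add (measure_ne_top _ _) (measure_ne_top _ _)]
  have hIoc : ((gaussianReal 0 1) (Set.Ioc x (x + ε))).toReal ≤ ε := by
    rw [gaussianReal_apply_eq_integral 0 one_ne_zero,
      ENNReal.toReal_ofReal (setIntegral_nonneg measurableSet_Ioc
        (fun t _ => gaussianPDFReal_nonneg 0 1 t))]
    calc ∫ t in Set.Ioc x (x + ε), gaussianPDFReal 0 1 t
        ≤ ∫ _ in Set.Ioc x (x + ε), (1:ℝ) := by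
          apply setIntegral_mono_on ((integrable_gaussianPDFReal 0 1).restrict)
            (integrableOn_const (by rw [Real.volume_Ioc]; exact ENNReal.ofReal_ne_top))
            measurableSet_Ioc (fun t _ => gaussianPDFReal_le_one t)
      _ = ε := by
          rw [setIntegral_const, Real.volume_real_Ioc_of_le (by linarith), smul_eq_mul, mul_one]
          ring
  linarith

lemma diff_le (μ : Measure ℝ) [IsProbabilityMeasure μ] (y : ℝ) {ε : ℝ}
    (hε : 0 < ε) (hε1 : ε ≤ 1) :
    ((∫ t, S0 ((t - y)/ε) ∂μ) - ∫ t, S0 ((t - y)/ε) ∂(gaussianReal 0 1)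
        ≤ 840/ε^3 * dC3 μ)
    ∧ ((∫ t, S0 ((t - y)/ε) ∂(gaussianReal 0 1)) - ∫ t, S0 ((t - y)/ε) ∂μ
        ≤ 840/ε^3 * dC3 μ) := by
  have hc : (0:ℝ) < ε^3/840 := by positivity
  set c : ℝ := ε^3/840 with hcdef
  set A : ℝ := ∫ t, S0 ((t - y)/ε) ∂μ with hA
  set B : ℝ := ∫ t, S0 ((t - y)/ε) ∂(gaussianReal 0 1) with hB
  have h1 : c * A - c * B ≤ dC3 μ := by
    have hmem := scaled_mem_dC3set μ y hε hε1 (a := c) (by rw [abs_of_pos hc])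
    have := le_csSup (bddAbove_dC3set μ) hmem
    rwa [integral_const_mul, integral_const_mul] at this
  have h2 : (-c) * A - (-c) * B ≤ dC3 μ := by
    have hmem := scaled_mem_dC3set μ y hε hε1 (a := -c) (by rw [abs_neg, abs_of_pos hc])
    have := le_csSup (bddAbove_dC3set μ) hmem
    rwa [integral_const_mul, integral_const_mul] at this
  have key : ∀ D : ℝ, c * D ≤ dC3 μ → D ≤ 840/ε^3 * dC3 μ := by
    intro D hD
    have h3 : D ≤ dC3 μ / c := (le_div_iff₀ hc).mpr (by linarith [mul_comm c D])
    have h4 : dC3 μ / c = 840/ε^3 * dC3 μ := by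
      rw [hcdef]
      field_simp
    linarith
  constructor
  · exact key (A - B) (by linarith [mul_sub c A B])
  · exact key (B - A) (by nlinarith)

lemma key_bound (μ : Measure ℝ) [IsProbabilityMeasure μ] (x : ℝ) {ε : ℝ}
    (hε : 0 < ε) (hε1 : ε ≤ 1) :
    |(μ (Set.Iic x)).toReal - ((gaussianReal 0 1) (Set.Iic x)).toReal|
      ≤ ε + 840/ε^3 * dC3 μ := by
  have hd0 : 0 ≤ dC3 μ := dC3_nonneg μ
  have hterm : 0 ≤ 840/ε^3 * dC3 μ := by positivity
  rw [abs_le]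
  constructor
  · -- lower: γ − μ ≤ ε + ...
    have l1 := lemC (x - ε) hε
    rw [sub_add_cancel] at l1
    have l2 := lemA (gaussianReal 0 1) (x - ε) hε
    have l3 := (diff_le μ (x - ε) hε hε1).2
    have l4 := lemB μ (x - ε) hε
    rw [sub_add_cancel] at l4
    linarith
  · -- upper
    have u1 := lemA μ x hε
    have u2 := (diff_le μ x hε hε1).1
    have u3 := lemB (gaussianReal 0 1) x hε
    have u4 := lemC x hε
    linarith

lemma toReal_prob_le_one {ν : Measure ℝ} [IsProbabilityMeasure ν] (s : Set ℝ) :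
    (ν s).toReal ≤ 1 := by
  rw [← ENNReal.toReal_one]
  exact ENNReal.toReal_mono (by simp) prob_le_one

/-- **Kolmogorov distance controlled by the `C³` distance to the Gaussian.** There is a
universal constant `C > 0` such that for every Borel probability measure `μ` on `ℝ`,
`sup_x |μ((−∞,x]) − γ((−∞,x])| ≤ C · dC3(μ)^{1/4}`. -/
theorem kolmogorov_le_dC3 :
    ∃ C : ℝ, 0 < C ∧ ∀ μ : Measure ℝ, IsProbabilityMeasure μ →
      (⨆ x : ℝ, |(μ (Set.Iic x)).toReal - ((gaussianReal 0 1) (Set.Iic x)).toReal|)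
        ≤ C * (dC3 μ) ^ ((1 : ℝ) / 4) := by
  refine ⟨841, by norm_num, fun μ hμ => ?_⟩
  haveI := hμ
  have hd0 : 0 ≤ dC3 μ := dC3_nonneg μ
  apply ciSup_le
  intro x
  rcases eq_or_lt_of_le hd0 with hd | hdpos
  · -- d = 0
    rw [← hd, Real.zero_rpow (by norm_num), mul_zero]
    apply le_of_forall_pos_le_add
    intro δ hδ
    have hεpos : 0 < min δ 1 := lt_min hδ one_pos
    have := key_bound μ x hεpos (min_le_right δ 1)
    rw [← hd, mul_zero] at this
    calc |(μ (Set.Iic x)).toReal - ((gaussianReal 0 1) (Set.Iic x)).toReal|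
        ≤ min δ 1 + 0 := this
      _ ≤ δ := by simpa using min_le_left δ 1
      _ = 0 + δ := (zero_add δ).symm
  · rcases lt_or_ge (dC3 μ) 1 with hlt | hge
    · -- 0 < d < 1 : take ε = d^(1/4)
      set d := dC3 μ with hddef
      have hεpos : 0 < d ^ ((1:ℝ)/4) := Real.rpow_pos_of_pos hdpos _
      have hε1 : d ^ ((1:ℝ)/4) ≤ 1 := Real.rpow_le_one hd0 hlt.le (by norm_num)
      have hkey := key_bound μ x hεpos hε1
      have h3 : (d ^ ((1:ℝ)/4))^3 = d ^ ((3:ℝ)/4) := by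
        rw [← Real.rpow_natCast (d ^ ((1:ℝ)/4)) 3, ← Real.rpow_mul hd0]
        norm_num
      have heq : 840/(d ^ ((1:ℝ)/4))^3 * d = 840 * d ^ ((1:ℝ)/4) := by
        calc 840/(d ^ ((1:ℝ)/4))^3 * d
            = 840 * (d ^ (1:ℝ) / d ^ ((3:ℝ)/4)) := by rw [h3, Real.rpow_one]; ring
          _ = 840 * d ^ ((1:ℝ) - (3:ℝ)/4) := by rw [← Real.rpow_sub hdpos]
          _ = 840 * d ^ ((1:ℝ)/4) := by norm_num
      rw [heq] at hkey
      linarith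
    · -- d ≥ 1 : trivial bound
      have h1 : |(μ (Set.Iic x)).toReal - ((gaussianReal 0 1) (Set.Iic x)).toReal| ≤ 1 := by
        rw [abs_le]
        constructor
        · linarith [toReal_prob_le_one (ν := gaussianReal 0 1) (Set.Iic x),
            ENNReal.toReal_nonneg (a := μ (Set.Iic x))]
        · linarith [toReal_prob_le_one (ν := μ) (Set.Iic x),
            ENNReal.toReal_nonneg (a := (gaussianReal 0 1) (Set.Iic x))]
      have h2 : (1:ℝ) ≤ (dC3 μ) ^ ((1:ℝ)/4) := Real.one_le_rpow hge (by norm_num)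
      nlinarith
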